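/- Let W be an ℝ^{m×d}-valued random matrix and W* ∈ ℝ^{m×d} a fixed matrix satisfying the multiplicative covariance structure E[(W−W*)_{ij}(W−W*)_{kl}] = (W*)_{ij} Σ_{jl} (W*)_{kl} for all indices, for some matrix Σ ∈ ℝ^{d×d} (with all products integrable). Let s be an ℝ^d-valued random vector and s* ∈ ℝ^d a fixed vector with E[(s−s*)(s−s*)ᵀ] = Σ (with all products integrable). Then for every fixed x ∈ ℝ^d and every fixed matrix D ∈ ℝ^{m×m}, the expected quadratic forms agree: E[ xᵀ (W−W*)ᵀ D (W−W*) x ] = E[ xᵀ diag(s−s*) (W*)ᵀ D W* diag(s−s*) x ]. -/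
import Mathlib


open Matrix MeasureTheory

/-- Core of the paper's Theorem 1: if the full-rank perturbation `W − W*` has the
multiplicative covariance structure `E[(W−W*)_{ij}(W−W*)_{kl}] = (W*)_{ij} Σ_{jl} (W*)_{kl}`
and the rank-1 perturbation `s − s*` has covariance `E[(s−s*)(s−s*)ᵀ] = Σ`, then for every
fixed input `x ∈ ℝ^d` and every weighting matrix `D ∈ ℝ^{m×m}`, the expected quadratic
forms agree:
`E[xᵀ (W−W*)ᵀ D (W−W*) x] = E[xᵀ diag(s−s*) (W*)ᵀ D W* diag(s−s*) x]`. -/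
theorem expected_quadratic_forms_agree {m d : ℕ}
    {Ω₁ : Type*} [MeasurableSpace Ω₁] (μ : Measure Ω₁)
    {Ω₂ : Type*} [MeasurableSpace Ω₂] (ν : Measure Ω₂)
    (W : Ω₁ → Matrix (Fin m) (Fin d) ℝ) (Wstar : Matrix (Fin m) (Fin d) ℝ)
    (s : Ω₂ → Fin d → ℝ) (sstar : Fin d → ℝ) (Sig : Matrix (Fin d) (Fin d) ℝ)
    (hWint : ∀ i j k l,
      Integrable (fun ω => (W ω i j - Wstar i j) * (W ω k l - Wstar k l)) μ)
    (hWcov : ∀ i j k l,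
      (∫ ω, (W ω i j - Wstar i j) * (W ω k l - Wstar k l) ∂μ) =
        Wstar i j * Sig j l * Wstar k l)
    (hsint : ∀ j l, Integrable (fun ω => (s ω j - sstar j) * (s ω l - sstar l)) ν)
    (hscov : ∀ j l, (∫ ω, (s ω j - sstar j) * (s ω l - sstar l) ∂ν) = Sig j l) :
    ∀ (x : Fin d → ℝ) (D : Matrix (Fin m) (Fin m) ℝ),
      (∫ ω, x ⬝ᵥ (((W ω - Wstar)ᵀ * D * (W ω - Wstar)).mulVec x) ∂μ) =
        ∫ ω, x ⬝ᵥ ((diagonal (fun j => s ω j - sstar j) * Wstarᵀ * D * Wstar *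
          diagonal (fun j => s ω j - sstar j)).mulVec x) ∂ν := by
  intro x D
  -- pointwise expansion of the LHS integrand
  have expandL : ∀ ω, x ⬝ᵥ (((W ω - Wstar)ᵀ * D * (W ω - Wstar)).mulVec x) =
      ∑ j, ∑ l, ∑ i, ∑ k, x j * x l * D i k *
        ((W ω i j - Wstar i j) * (W ω k l - Wstar k l)) := by
    intro ω
    simp only [dotProduct, mulVec, Matrix.mul_apply, transpose_apply, Matrix.sub_apply,
      Finset.mul_sum, Finset.sum_mul]
    refine Finset.sum_congr rfl fun j _ => Finset.sum_congr rfl fun l _ => ?_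
    rw [Finset.sum_comm]
    exact Finset.sum_congr rfl fun i _ => Finset.sum_congr rfl fun k _ => by ring
  -- pointwise expansion of the RHS integrand
  have expandR : ∀ ω, x ⬝ᵥ ((diagonal (fun j => s ω j - sstar j) * Wstarᵀ * D * Wstar *
        diagonal (fun j => s ω j - sstar j)).mulVec x) =
      ∑ j, ∑ l, ∑ i, ∑ k, x j * x l * D i k * Wstar i j * Wstar k l *
        ((s ω j - sstar j) * (s ω l - sstar l)) := by
    intro ω
    set v : Fin d → ℝ := fun j => s ω j - sstar j with hv
    have hentry : ∀ j l, (diagonal v * Wstarᵀ * D * Wstar * diagonal v) j l =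
        v j * (Wstarᵀ * D * Wstar) j l * v l := by
      intro j l
      rw [Matrix.mul_diagonal, Matrix.mul_assoc, Matrix.mul_assoc, Matrix.diagonal_mul,
        ← Matrix.mul_assoc]
    simp only [dotProduct, mulVec, hentry, Matrix.mul_apply, transpose_apply,
      Finset.mul_sum, Finset.sum_mul]
    refine Finset.sum_congr rfl fun j _ => Finset.sum_congr rfl fun l _ => ?_
    rw [Finset.sum_comm]
    exact Finset.sum_congr rfl fun i _ => Finset.sum_congr rfl fun k _ => by ring
  -- integrability of the individual LHS terms and partial sums
  have hIL4 : ∀ (j l : Fin d) (i k : Fin m), Integrable (fun ω => x j * x l * D i k *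
      ((W ω i j - Wstar i j) * (W ω k l - Wstar k l))) μ :=
    fun j l i k => (hWint i j k l).const_mul _
  have hIL3 : ∀ (j l : Fin d) (i : Fin m), Integrable (fun ω => ∑ k, x j * x l * D i k *
      ((W ω i j - Wstar i j) * (W ω k l - Wstar k l))) μ :=
    fun j l i => integrable_finset_sum _ fun k _ => hIL4 j l i k
  have hIL2 : ∀ (j l : Fin d), Integrable (fun ω => ∑ i, ∑ k, x j * x l * D i k *
      ((W ω i j - Wstar i j) * (W ω k l - Wstar k l))) μ :=
    fun j l => integrable_finset_sum _ fun i _ => hIL3 j l i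
  have hIL1 : ∀ (j : Fin d), Integrable (fun ω => ∑ l, ∑ i, ∑ k, x j * x l * D i k *
      ((W ω i j - Wstar i j) * (W ω k l - Wstar k l))) μ :=
    fun j => integrable_finset_sum _ fun l _ => hIL2 j l
  -- integrability for the RHS terms
  have hIR4 : ∀ (j l : Fin d) (i k : Fin m), Integrable (fun ω =>
      x j * x l * D i k * Wstar i j * Wstar k l *
        ((s ω j - sstar j) * (s ω l - sstar l))) ν :=
    fun j l i k => (hsint j l).const_mul _
  have hIR3 : ∀ (j l : Fin d) (i : Fin m), Integrable (fun ω => ∑ k,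
      x j * x l * D i k * Wstar i j * Wstar k l *
        ((s ω j - sstar j) * (s ω l - sstar l))) ν :=
    fun j l i => integrable_finset_sum _ fun k _ => hIR4 j l i k
  have hIR2 : ∀ (j l : Fin d), Integrable (fun ω => ∑ i, ∑ k,
      x j * x l * D i k * Wstar i j * Wstar k l *
        ((s ω j - sstar j) * (s ω l - sstar l))) ν :=
    fun j l => integrable_finset_sum _ fun i _ => hIR3 j l i
  have hIR1 : ∀ (j : Fin d), Integrable (fun ω => ∑ l, ∑ i, ∑ k,
      x j * x l * D i k * Wstar i j * Wstar k l *
        ((s ω j - sstar j) * (s ω l - sstar l))) ν :=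
    fun j => integrable_finset_sum _ fun l _ => hIR2 j l
  calc (∫ ω, x ⬝ᵥ (((W ω - Wstar)ᵀ * D * (W ω - Wstar)).mulVec x) ∂μ)
      = ∑ j, ∑ l, ∑ i, ∑ k, x j * x l * D i k *
          (Wstar i j * Sig j l * Wstar k l) := by
        simp only [expandL]
        rw [integral_finset_sum _ fun j _ => hIL1 j]
        refine Finset.sum_congr rfl fun j _ => ?_
        rw [integral_finset_sum _ fun l _ => hIL2 j l]
        refine Finset.sum_congr rfl fun l _ => ?_
        rw [integral_finset_sum _ fun i _ => hIL3 j l i]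
        refine Finset.sum_congr rfl fun i _ => ?_
        rw [integral_finset_sum _ fun k _ => hIL4 j l i k]
        refine Finset.sum_congr rfl fun k _ => ?_
        rw [MeasureTheory.integral_const_mul, hWcov]
    _ = ∑ j, ∑ l, ∑ i, ∑ k, x j * x l * D i k * Wstar i j * Wstar k l * Sig j l := by
        refine Finset.sum_congr rfl fun j _ => Finset.sum_congr rfl fun l _ =>
          Finset.sum_congr rfl fun i _ => Finset.sum_congr rfl fun k _ => by ring
    _ = ∫ ω, x ⬝ᵥ ((diagonal (fun j => s ω j - sstar j) * Wstarᵀ * D * Wstar *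
          diagonal (fun j => s ω j - sstar j)).mulVec x) ∂ν := by
        simp only [expandR]
        rw [integral_finset_sum _ fun j _ => hIR1 j]
        refine Finset.sum_congr rfl fun j _ => ?_
        rw [integral_finset_sum _ fun l _ => hIR2 j l]
        refine Finset.sum_congr rfl fun l _ => ?_
        rw [integral_finset_sum _ fun i _ => hIR3 j l i]
        refine Finset.sum_congr rfl fun i _ => ?_
        rw [integral_finset_sum _ fun k _ => hIR4 j l i k]
        refine Finset.sum_congr rfl fun k _ => ?_
        rw [MeasureTheory.integral_const_mul, hscov]
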